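/- Let $V$ be an abelian group. The graded algebra associated to the filtration of the rational group algebra $\mathbb{Q}[V]$ by powers of its augmentation ideal is naturally isomorphic to the symmetric algebra over $\mathbb{Q}$ on the vector space $\mathbb{Q} \otimes V$. -/

import Mathlib

noncomputable section

variable (V : Type) [AddCommGroup V]

/-- The augmentation of the rational group algebra `ℚ[V]`. -/
def aug : AddMonoidAlgebra ℚ V →ₐ[ℚ] ℚ :=
  AddMonoidAlgebra.lift ℚ ℚ V 1

/-- The augmentation ideal `I` of `ℚ[V]`. -/
def augI : Ideal (AddMonoidAlgebra ℚ V) := RingHom.ker (aug V)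

/-- The graded algebra `⨁ I^d/I^{d+1}` associated to the filtration of `ℚ[V]` by the powers of
the augmentation ideal, realized as the quotient of the Rees algebra `⨁ I^d` by the ideal
generated by `I` placed in degree `0`. -/
def GrAlg :=
  ↥(reesAlgebra (augI V)) ⧸
    (Ideal.span ((algebraMap (AddMonoidAlgebra ℚ V) ↥(reesAlgebra (augI V))) ''
      (augI V : Set (AddMonoidAlgebra ℚ V))))

instance : CommRing (GrAlg V) := by unfold GrAlg; infer_instance
instance : Algebra ℚ (GrAlg V) := by unfold GrAlg; infer_instance

/-- The `ℚ`-vector space `ℚ ⊗ V`. -/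
abbrev MQ := TensorProduct ℤ ℚ V

/-- The commutativity relations presenting the symmetric algebra on `ℚ ⊗ V` as a quotient of
the tensor algebra. -/
inductive symRel : TensorAlgebra ℚ (MQ V) → TensorAlgebra ℚ (MQ V) → Prop
  | comm (x y : MQ V) :
      symRel (TensorAlgebra.ι ℚ x * TensorAlgebra.ι ℚ y)
        (TensorAlgebra.ι ℚ y * TensorAlgebra.ι ℚ x)

namespace Stmt17

abbrev Sym := RingQuot (symRel V)

abbrev symMk : TensorAlgebra ℚ (MQ V) →ₐ[ℚ] Sym V := RingQuot.mkAlgHom ℚ (symRel V)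

variable {V}

theorem sym_commute (x y : TensorAlgebra ℚ (MQ V)) :
    Commute (symMk V x) (symMk V y) := by
  have hι : ∀ (m : MQ V) (y : TensorAlgebra ℚ (MQ V)),
      Commute (symMk V (TensorAlgebra.ι ℚ m)) (symMk V y) := by
    intro m y
    induction y using TensorAlgebra.induction with
    | algebraMap r =>
        rw [AlgHom.commutes]
        exact (Algebra.commutes r _).symm
    | ι m' =>
        have := RingQuot.mkAlgHom_rel ℚ (symRel.comm (V := V) m m')
        simp only [map_mul] at this
        exact this
    | mul a b ha hb => rw [map_mul]; exact ha.mul_right hb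
    | add a b ha hb => rw [map_add]; exact ha.add_right hb
  induction x using TensorAlgebra.induction with
  | algebraMap r =>
      rw [AlgHom.commutes]
      exact Algebra.commutes r _
  | ι m => exact hι m y
  | mul a b ha hb => rw [map_mul]; exact ha.mul_left hb
  | add a b ha hb => rw [map_add]; exact ha.add_left hb

instance : CommRing (Sym V) :=
  { (inferInstance : Ring (Sym V)) with
    mul_comm := fun a b => by
      obtain ⟨x, rfl⟩ := RingQuot.mkAlgHom_surjective ℚ (symRel V) a
      obtain ⟨y, rfl⟩ := RingQuot.mkAlgHom_surjective ℚ (symRel V) b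
      exact sym_commute x y }


open PowerSeries

variable (V)

/-- `ι` into the symmetric algebra. -/
abbrev ιs : MQ V →ₗ[ℚ] Sym V :=
  (symMk V).toLinearMap.comp (TensorAlgebra.ι ℚ)

/-- group elements to exp power series -/
def expHom : Multiplicative V →* PowerSeries (Sym V) where
  toFun v := rescale (ιs V (1 ⊗ₜ v.toAdd)) (exp (Sym V))
  map_one' := by
    simp [TensorProduct.tmul_zero]
  map_mul' v w := by
    have h : ιs V (1 ⊗ₜ Multiplicative.toAdd (v * w)) =
        ιs V (1 ⊗ₜ Multiplicative.toAdd v) + ιs V (1 ⊗ₜ Multiplicative.toAdd w) := by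
      rw [← map_add, ← TensorProduct.tmul_add]; rfl
    show rescale ((ιs V) (1 ⊗ₜ[ℤ] Multiplicative.toAdd (v * w))) (exp (Sym V)) = _
    rw [h, PowerSeries.exp_mul_exp_eq_exp_add]

/-- The exponential algebra map `ℚ[V] → Sym⟦X⟧`. -/
def E : AddMonoidAlgebra ℚ V →ₐ[ℚ] PowerSeries (Sym V) :=
  AddMonoidAlgebra.lift ℚ (PowerSeries (Sym V)) V (expHom V)

variable {V}

theorem E_single (v : V) (c : ℚ) :
    E V (AddMonoidAlgebra.single v c) = c • rescale (ιs V (1 ⊗ₜ v)) (exp (Sym V)) := by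
  rw [E, AddMonoidAlgebra.lift_single]
  rfl

theorem constantCoeff_E (f : AddMonoidAlgebra ℚ V) :
    constantCoeff (R := Sym V) (E V f) = algebraMap ℚ (Sym V) (aug V f) := by
  have h1 : ∀ v : V, (constantCoeff (R := Sym V)) (E V (AddMonoidAlgebra.single v 1)) = 1 := by
    intro v
    rw [E_single, one_smul, ← coeff_zero_eq_constantCoeff_apply, coeff_rescale]
    simp
  have h0 : ∀ c : ℚ, (constantCoeff (R := Sym V)) (E V (AddMonoidAlgebra.single (0:V) c))
      = algebraMap ℚ (Sym V) c := by
    intro c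
    rw [E_single, ← coeff_zero_eq_constantCoeff_apply, PowerSeries.coeff_smul, coeff_rescale]
    simp [Algebra.smul_def]
  induction f using AddMonoidAlgebra.induction_on with
  | of v => simpa [aug] using h1 v
  | add f g hf hg => simp [map_add, hf, hg]
  | smul c f hf => simp [map_smul, hf, Algebra.smul_def, h0, aug]

theorem coeff_one_E (v : V) :
    coeff (R := Sym V) 1 (E V (AddMonoidAlgebra.single v 1)) = ιs V (1 ⊗ₜ v) := by
  rw [E_single, one_smul, coeff_rescale]
  simp

theorem X_pow_dvd_E {n : ℕ} {f : AddMonoidAlgebra ℚ V} (hf : f ∈ (augI V) ^ n) :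
    (X : PowerSeries (Sym V)) ^ n ∣ E V f := by
  have h1 : Ideal.map (E V).toRingHom (augI V) ≤ Ideal.span {(X : PowerSeries (Sym V))} := by
    rw [Ideal.map_le_iff_le_comap]
    intro g hg
    simp only [Ideal.mem_comap, AlgHom.toRingHom_eq_coe, RingHom.coe_coe,
      Ideal.mem_span_singleton]
    rw [X_dvd_iff, constantCoeff_E]
    rw [augI, RingHom.mem_ker] at hg
    rw [hg, map_zero]
  have h2 : E V f ∈ Ideal.map (E V).toRingHom ((augI V) ^ n) :=
    Ideal.mem_map_of_mem _ hf
  rw [Ideal.map_pow] at h2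
  have h3 := Ideal.pow_right_mono h1 n h2
  rw [Ideal.span_singleton_pow, Ideal.mem_span_singleton] at h3
  exact h3

end Stmt17

namespace Stmt17

open PowerSeries Finset

/-- The symbol map on polynomials: sum of the `i`-th power series coefficient of `E` applied to
the `i`-th polynomial coefficient. -/
def ψ0 : Polynomial (AddMonoidAlgebra ℚ V) → Sym V :=
  fun p => p.sum fun i r => PowerSeries.coeff (R := Sym V) i (E V r)

variable {V}

theorem ψ0_apply_zero : ∀ i, PowerSeries.coeff (R := Sym V) i (E V 0) = 0 := by
  intro i; rw [map_zero, map_zero]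

theorem ψ0_range {p : Polynomial (AddMonoidAlgebra ℚ V)} {N : ℕ} (h : p.natDegree < N) :
    ψ0 V p = ∑ i ∈ range N, PowerSeries.coeff (R := Sym V) i (E V (p.coeff i)) :=
  Polynomial.sum_over_range' p (fun _ => ψ0_apply_zero _) N h

theorem ψ0_add (p q : Polynomial (AddMonoidAlgebra ℚ V)) :
    ψ0 V (p + q) = ψ0 V p + ψ0 V q := by
  unfold ψ0
  rw [Polynomial.sum_add_index]
  · exact fun _ => ψ0_apply_zero _
  · intro i a b; rw [map_add, map_add]

theorem coeff_mul_diag {i j : ℕ} {a b : PowerSeries (Sym V)}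
    (ha : (PowerSeries.X : PowerSeries (Sym V)) ^ i ∣ a)
    (hb : (PowerSeries.X : PowerSeries (Sym V)) ^ j ∣ b) :
    PowerSeries.coeff (R := Sym V) (i + j) (a * b) =
      PowerSeries.coeff (R := Sym V) i a * PowerSeries.coeff (R := Sym V) j b := by
  obtain ⟨a, rfl⟩ := ha
  obtain ⟨b, rfl⟩ := hb
  rw [show (PowerSeries.X : PowerSeries (Sym V)) ^ i * a * (PowerSeries.X ^ j * b)
      = PowerSeries.X ^ (i + j) * (a * b) by ring]
  simp [PowerSeries.coeff_X_pow_mul', coeff_zero_eq_constantCoeff_apply, map_mul]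

theorem ψ0_mul {p q : Polynomial (AddMonoidAlgebra ℚ V)} (hp : p ∈ reesAlgebra (augI V))
    (hq : q ∈ reesAlgebra (augI V)) : ψ0 V (p * q) = ψ0 V p * ψ0 V q := by
  set P : ℕ → Sym V := fun i => PowerSeries.coeff (R := Sym V) i (E V (p.coeff i)) with hP
  set Q : ℕ → Sym V := fun j => PowerSeries.coeff (R := Sym V) j (E V (q.coeff j)) with hQ
  set n := p.natDegree + 1 with hn
  set m := q.natDegree + 1 with hm
  set N := n + m with hN
  have hPz : ∀ i, n ≤ i → P i = 0 := fun i hi => by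
    simp only [hP, Polynomial.coeff_eq_zero_of_natDegree_lt (show p.natDegree < i by omega),
      map_zero]
  have hQz : ∀ j, m ≤ j → Q j = 0 := fun j hj => by
    simp only [hQ, Polynomial.coeff_eq_zero_of_natDegree_lt (show q.natDegree < j by omega),
      map_zero]
  set Tp : Polynomial (Sym V) := ∑ i ∈ range n, Polynomial.monomial i (P i) with hTp
  set Tq : Polynomial (Sym V) := ∑ j ∈ range m, Polynomial.monomial j (Q j) with hTq
  have hcTp : ∀ k, Tp.coeff k = P k := by
    intro k
    rw [hTp, Polynomial.finset_sum_coeff]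
    simp only [Polynomial.coeff_monomial]
    rw [Finset.sum_ite_eq' (range n) k P]
    split_ifs with h
    · rfl
    · exact (hPz k (by simpa using h)).symm
  have hcTq : ∀ k, Tq.coeff k = Q k := by
    intro k
    rw [hTq, Polynomial.finset_sum_coeff]
    simp only [Polynomial.coeff_monomial]
    rw [Finset.sum_ite_eq' (range m) k Q]
    split_ifs with h
    · rfl
    · exact (hQz k (by simpa using h)).symm
  have hdTp : Tp.natDegree ≤ p.natDegree := by
    apply Polynomial.natDegree_sum_le_of_forall_le
    intro i hi
    exact le_trans (Polynomial.natDegree_monomial_le _) (by simp at hi; omega)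
  have hdTq : Tq.natDegree ≤ q.natDegree := by
    apply Polynomial.natDegree_sum_le_of_forall_le
    intro i hi
    exact le_trans (Polynomial.natDegree_monomial_le _) (by simp at hi; omega)
  have hevp : ψ0 V p = Tp.eval 1 := by
    rw [ψ0_range (show p.natDegree < n by omega), hTp]
    rw [Polynomial.eval_finset_sum]
    refine Finset.sum_congr rfl fun i _ => ?_
    rw [Polynomial.eval_monomial, one_pow, mul_one]
  have hevq : ψ0 V q = Tq.eval 1 := by
    rw [ψ0_range (show q.natDegree < m by omega), hTq]
    rw [Polynomial.eval_finset_sum]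
    refine Finset.sum_congr rfl fun j _ => ?_
    rw [Polynomial.eval_monomial, one_pow, mul_one]
  have key : ψ0 V (p * q) = ∑ k ∈ range N, (Tp * Tq).coeff k := by
    rw [ψ0_range (show (p * q).natDegree < N from
      lt_of_le_of_lt (Polynomial.natDegree_mul_le) (by omega))]
    refine Finset.sum_congr rfl fun k _ => ?_
    rw [Polynomial.coeff_mul, Polynomial.coeff_mul, map_sum, map_sum]
    refine Finset.sum_congr rfl fun ij hij => ?_
    have hij' := Finset.HasAntidiagonal.mem_antidiagonal.mp hij
    rw [map_mul, hcTp, hcTq, hP, hQ]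
    rw [← hij']
    exact coeff_mul_diag (X_pow_dvd_E (hp ij.1)) (X_pow_dvd_E (hq ij.2))
  rw [key, hevp, hevq, ← Polynomial.eval_mul]
  rw [Polynomial.eval_eq_sum_range' (n := N)
    (lt_of_le_of_lt (Polynomial.natDegree_mul_le) (by omega))]
  simp

end Stmt17

namespace Stmt17

open PowerSeries Finset

/-- The ideal of the Rees algebra generated by `I` in degree zero. -/
def J : Ideal ↥(reesAlgebra (augI V)) :=
  Ideal.span ((algebraMap (AddMonoidAlgebra ℚ V) ↥(reesAlgebra (augI V))) ''
      (augI V : Set (AddMonoidAlgebra ℚ V)))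

theorem ψ0_C (r : AddMonoidAlgebra ℚ V) :
    ψ0 V (Polynomial.C r) = algebraMap ℚ (Sym V) (aug V r) := by
  unfold ψ0
  rw [Polynomial.sum_C_index (ψ0_apply_zero 0)]
  rw [coeff_zero_eq_constantCoeff_apply, constantCoeff_E]

/-- The symbol algebra map from the Rees algebra to the symmetric algebra. -/
def ψ : ↥(reesAlgebra (augI V)) →ₐ[ℚ] Sym V where
  toFun p := ψ0 V p.1
  map_one' := by
    show ψ0 V ((1 : ↥(reesAlgebra (augI V))) : Polynomial (AddMonoidAlgebra ℚ V)) = 1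
    have : ((1 : ↥(reesAlgebra (augI V))) : Polynomial (AddMonoidAlgebra ℚ V)) =
        Polynomial.C 1 := by simp
    rw [this, ψ0_C]
    simp
  map_mul' p q := ψ0_mul p.2 q.2
  map_zero' := by
    have h : ψ0 V ((0 : ↥(reesAlgebra (augI V))) : Polynomial (AddMonoidAlgebra ℚ V)) = 0 := by
      have : ((0 : ↥(reesAlgebra (augI V))) : Polynomial (AddMonoidAlgebra ℚ V)) = 0 := rfl
      rw [this]
      unfold ψ0
      rw [Polynomial.sum_zero_index]
    exact h
  map_add' p q := ψ0_add p.1 q.1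
  commutes' q := by
    show ψ0 V _ = _
    have : ((algebraMap ℚ ↥(reesAlgebra (augI V)) q : ↥(reesAlgebra (augI V))) :
        Polynomial (AddMonoidAlgebra ℚ V)) = Polynomial.C (algebraMap ℚ _ q) := by
      simp [Polynomial.algebraMap_apply]
    rw [this, ψ0_C, AlgHom.commutes]
    simp

theorem ψ_ker : ∀ x ∈ J V, ψ V x = 0 := by
  have h : J V ≤ RingHom.ker (ψ V).toRingHom := by
    rw [J, Ideal.span_le]
    rintro x ⟨f, hf, rfl⟩
    rw [SetLike.mem_coe, RingHom.mem_ker]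
    show ψ0 V _ = 0
    have hval : ((algebraMap (AddMonoidAlgebra ℚ V) ↥(reesAlgebra (augI V)) f :
        ↥(reesAlgebra (augI V))) : Polynomial (AddMonoidAlgebra ℚ V)) = Polynomial.C f := rfl
    rw [hval, ψ0_C, show aug V f = 0 from RingHom.mem_ker.mp hf, map_zero]
  exact fun x hx => h hx

/-- `ψ` descends to the graded algebra. -/
def ψbar : GrAlg V →ₐ[ℚ] Sym V :=
  Ideal.Quotient.liftₐ (J V) (ψ V) (ψ_ker V)

/-- The quotient map onto the graded algebra. -/
def grMk : ↥(reesAlgebra (augI V)) →ₐ[ℚ] GrAlg V :=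
  Ideal.Quotient.mkₐ ℚ (J V)

end Stmt17

namespace Stmt17

open PowerSeries Finset

set_option synthInstance.maxHeartbeats 1000000

variable {V}

theorem aug_single (v : V) (c : ℚ) : aug V (AddMonoidAlgebra.single v c) = c := by
  rw [aug, AddMonoidAlgebra.lift_single]
  simp

theorem single_sub_one_mem (v : V) : AddMonoidAlgebra.single v 1 - 1 ∈ augI V := by
  rw [augI, RingHom.mem_ker, map_sub, map_one, aug_single, sub_self]

/-- The degree-one element `([v]-1)·X` of the Rees algebra. -/
def deg1 (v : V) : ↥(reesAlgebra (augI V)) :=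
  ⟨Polynomial.monomial 1 (AddMonoidAlgebra.single v 1 - 1), by
    rw [reesAlgebra.monomial_mem, pow_one]
    exact single_sub_one_mem v⟩

theorem grMk_eq_zero {x : ↥(reesAlgebra (augI V))} (hx : x ∈ J V) : grMk V x = 0 := by
  have h : grMk V x = Ideal.Quotient.mk (J V) x := rfl
  rw [h]
  exact Ideal.Quotient.eq_zero_iff_mem.mpr hx

theorem grMk_deg1_add (v w : V) :
    grMk V (deg1 (v + w)) = grMk V (deg1 v) + grMk V (deg1 w) := by
  rw [← map_add, ← sub_eq_zero, ← map_sub]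
  apply grMk_eq_zero
  have heq : deg1 (v + w) - (deg1 v + deg1 w) =
      (algebraMap (AddMonoidAlgebra ℚ V) ↥(reesAlgebra (augI V))
        (AddMonoidAlgebra.single v 1 - 1)) *
      ⟨Polynomial.monomial 1 (AddMonoidAlgebra.single w 1 - 1), by
        rw [reesAlgebra.monomial_mem, pow_one]; exact single_sub_one_mem w⟩ := by
    apply Subtype.ext
    have h1 : ((deg1 (v + w) - (deg1 v + deg1 w) : ↥(reesAlgebra (augI V))) :
        Polynomial (AddMonoidAlgebra ℚ V)) =
        Polynomial.monomial 1 (AddMonoidAlgebra.single (v + w) (1:ℚ) - 1)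
          - (Polynomial.monomial 1 (AddMonoidAlgebra.single v (1:ℚ) - 1)
            + Polynomial.monomial 1 (AddMonoidAlgebra.single w (1:ℚ) - 1)) := rfl
    have h2 : (((algebraMap (AddMonoidAlgebra ℚ V) ↥(reesAlgebra (augI V))
        (AddMonoidAlgebra.single v 1 - 1)) *
        (⟨Polynomial.monomial 1 (AddMonoidAlgebra.single w 1 - 1), by
          rw [reesAlgebra.monomial_mem, pow_one]; exact single_sub_one_mem w⟩ :
            ↥(reesAlgebra (augI V))) : ↥(reesAlgebra (augI V))) :
        Polynomial (AddMonoidAlgebra ℚ V)) =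
        Polynomial.C (AddMonoidAlgebra.single v 1 - 1) *
          Polynomial.monomial 1 (AddMonoidAlgebra.single w 1 - 1) := rfl
    rw [h1, h2, Polynomial.C_mul_monomial, ← map_add (Polynomial.monomial 1),
      ← Polynomial.monomial_sub]
    congr 1
    rw [show AddMonoidAlgebra.single (v + w) (1:ℚ)
        = AddMonoidAlgebra.single v 1 * AddMonoidAlgebra.single w 1 by
      rw [AddMonoidAlgebra.single_mul_single, one_mul]]
    ring
  rw [heq]
  exact Ideal.mul_mem_right _ _ (Ideal.subset_span ⟨_, single_sub_one_mem v, rfl⟩)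

variable (V)

/-- `V → GrAlg`, `v ↦ [([v]-1)X]`, as an additive map. -/
def gAdd : V →+ GrAlg V where
  toFun v := grMk V (deg1 v)
  map_zero' := by
    show grMk V (deg1 0) = 0
    have h : deg1 (0 : V) = 0 := by
      apply Subtype.ext
      show Polynomial.monomial 1 (AddMonoidAlgebra.single (0:V) (1:ℚ) - 1) = 0
      have h' : (AddMonoidAlgebra.single (0:V) (1:ℚ)) = 1 := rfl
      rw [h', sub_self, map_zero]
    rw [h, map_zero]
  map_add' := grMk_deg1_add

/-- `ℚ ⊗ V → GrAlg` linear. -/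
def Lmap : MQ V →ₗ[ℚ] GrAlg V :=
  haveI : IsScalarTower ℤ ℚ (GrAlg V) :=
    ⟨fun n q x => by
      rw [zsmul_eq_mul, mul_smul, Algebra.smul_def (n : ℚ), map_intCast, ← zsmul_eq_mul]⟩
  LinearMap.liftBaseChange ℚ (gAdd V).toIntLinearMap

/-- tensor algebra to `GrAlg`. -/
def TAhom : TensorAlgebra ℚ (MQ V) →ₐ[ℚ] GrAlg V :=
  TensorAlgebra.lift ℚ (Lmap V)

/-- The natural map from the symmetric algebra to the graded algebra. -/
def φ : Sym V →ₐ[ℚ] GrAlg V :=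
  RingQuot.liftAlgHom ℚ ⟨TAhom V, by
    rintro x y ⟨a, b⟩
    rw [map_mul, map_mul, mul_comm]⟩

variable {V}

theorem φ_mk_ι (m : MQ V) :
    φ V (symMk V (TensorAlgebra.ι ℚ m)) = Lmap V m := by
  rw [φ, symMk, RingQuot.liftAlgHom_mkAlgHom_apply, TAhom, TensorAlgebra.lift_ι_apply]

theorem Lmap_one_tmul (v : V) : Lmap V ((1 : ℚ) ⊗ₜ[ℤ] v) = grMk V (deg1 v) := by
  erw [Lmap, LinearMap.liftBaseChange_tmul, one_smul]
  rfl

theorem ψ_deg1 (v : V) : ψ V (deg1 v) = ιs V ((1 : ℚ) ⊗ₜ[ℤ] v) := by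
  show ψ0 V ((deg1 v : ↥(reesAlgebra (augI V))) : Polynomial (AddMonoidAlgebra ℚ V)) = _
  have h : ((deg1 v : ↥(reesAlgebra (augI V))) : Polynomial (AddMonoidAlgebra ℚ V)) =
      Polynomial.monomial 1 (AddMonoidAlgebra.single v 1 - 1) := rfl
  rw [h]
  unfold ψ0
  rw [Polynomial.sum_monomial_index _ _ (ψ0_apply_zero 1)]
  rw [map_sub, map_sub, map_one]
  have h1 : PowerSeries.coeff (R := Sym V) 1 (1 : PowerSeries (Sym V)) = 0 := by
    simp [PowerSeries.coeff_one]
  rw [h1, sub_zero, coeff_one_E]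

end Stmt17

namespace Stmt17

open PowerSeries Finset

set_option synthInstance.maxHeartbeats 1000000
set_option maxHeartbeats 1000000

variable {V}

theorem ψbar_grMk (x : ↥(reesAlgebra (augI V))) : ψbar V (grMk V x) = ψ V x := rfl

theorem ψbar_φ_ι (v : V) :
    ψbar V (φ V (symMk V (TensorAlgebra.ι ℚ ((1:ℚ) ⊗ₜ[ℤ] v)))) =
      symMk V (TensorAlgebra.ι ℚ ((1:ℚ) ⊗ₜ[ℤ] v)) := by
  rw [φ_mk_ι, Lmap_one_tmul, ψbar_grMk, ψ_deg1]
  rfl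

theorem ψbar_comp_φ : (ψbar V).comp (φ V) = AlgHom.id ℚ (Sym V) := by
  refine RingQuot.ringQuot_ext' _ _ _ ?_
  apply TensorAlgebra.hom_ext
  apply LinearMap.ext
  intro x
  simp only [LinearMap.comp_apply, AlgHom.toLinearMap_apply, AlgHom.comp_apply, AlgHom.id_apply]
  induction x using TensorProduct.induction_on with
  | zero => simp
  | tmul q v =>
      have hx : (q ⊗ₜ[ℤ] v : MQ V) = q • ((1:ℚ) ⊗ₜ[ℤ] v) := by
        rw [TensorProduct.smul_tmul', smul_eq_mul, mul_one]
      rw [hx]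
      simp only [map_smul]
      rw [ψbar_φ_ι]
  | add a b ha hb =>
      simp only [map_add, ha, hb]

theorem augI_le_span {f : AddMonoidAlgebra ℚ V} (hf : f ∈ augI V) :
    f ∈ Submodule.span ℚ (Set.range fun v : V => AddMonoidAlgebra.single v (1:ℚ) - 1) := by
  have haug : ∑ v ∈ f.coeff.support, f.coeff v = 0 := by
    have : aug V f = ∑ v ∈ f.coeff.support, f.coeff v := by
      rw [aug, AddMonoidAlgebra.lift_apply]
      simp [Finsupp.sum]
    rw [← this]
    exact RingHom.mem_ker.mp hf
  have hrep : f = ∑ v ∈ f.coeff.support, f.coeff v • (AddMonoidAlgebra.single v (1:ℚ) - 1) := by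
    have h1 : ∑ v ∈ f.coeff.support, f.coeff v • (AddMonoidAlgebra.single v (1:ℚ) - 1)
        = (∑ v ∈ f.coeff.support, AddMonoidAlgebra.single v (f.coeff v))
          - (∑ v ∈ f.coeff.support, f.coeff v) • (1 : AddMonoidAlgebra ℚ V) := by
      rw [Finset.sum_smul, ← Finset.sum_sub_distrib]
      refine Finset.sum_congr rfl fun v _ => ?_
      rw [smul_sub, AddMonoidAlgebra.smul_single, smul_eq_mul, mul_one]
    rw [h1, haug, zero_smul, sub_zero]
    exact (AddMonoidAlgebra.sum_coeff_single f).symm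
  rw [hrep]
  exact Submodule.sum_mem _ fun v _ =>
    Submodule.smul_mem _ _ (Submodule.subset_span ⟨v, rfl⟩)

theorem grMk_algebraMap_mem (r : AddMonoidAlgebra ℚ V) :
    grMk V (algebraMap (AddMonoidAlgebra ℚ V) ↥(reesAlgebra (augI V)) r) ∈ (φ V).range := by
  have htower : ∀ q : ℚ, algebraMap (AddMonoidAlgebra ℚ V) ↥(reesAlgebra (augI V))
      (algebraMap ℚ (AddMonoidAlgebra ℚ V) q) = algebraMap ℚ ↥(reesAlgebra (augI V)) q := by
    intro q
    apply Subtype.ext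
    show Polynomial.C (algebraMap ℚ (AddMonoidAlgebra ℚ V) q)
      = algebraMap ℚ (Polynomial (AddMonoidAlgebra ℚ V)) q
    rw [Polynomial.algebraMap_apply]
  have hsplit : algebraMap (AddMonoidAlgebra ℚ V) ↥(reesAlgebra (augI V)) r
      = algebraMap (AddMonoidAlgebra ℚ V) ↥(reesAlgebra (augI V))
          (r - algebraMap ℚ (AddMonoidAlgebra ℚ V) (aug V r))
        + algebraMap ℚ ↥(reesAlgebra (augI V)) (aug V r) := by
    rw [← htower, ← map_add, sub_add_cancel]
  rw [hsplit, map_add]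
  have h0 : grMk V (algebraMap (AddMonoidAlgebra ℚ V) ↥(reesAlgebra (augI V))
      (r - algebraMap ℚ (AddMonoidAlgebra ℚ V) (aug V r))) = 0 := by
    apply grMk_eq_zero
    apply Ideal.subset_span
    refine ⟨_, ?_, rfl⟩
    rw [SetLike.mem_coe, augI, RingHom.mem_ker, map_sub, AlgHom.commutes]
    simp
  rw [h0, zero_add, AlgHom.commutes]
  exact (φ V).range.algebraMap_mem _

theorem span_le_augI {x : AddMonoidAlgebra ℚ V}
    (hx : x ∈ Submodule.span ℚ (Set.range fun v : V => AddMonoidAlgebra.single v (1:ℚ) - 1)) :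
    x ∈ augI V := by
  refine Submodule.span_induction (p := fun g _ => g ∈ augI V) ?_ ?_ ?_ ?_ hx
  · rintro g ⟨v, rfl⟩
    exact single_sub_one_mem v
  · exact Ideal.zero_mem _
  · intro a b _ _ ha hb
    exact Ideal.add_mem _ ha hb
  · intro q a _ ha
    rw [Algebra.smul_def]
    exact Ideal.mul_mem_left _ _ ha

theorem grMk_mon1_mem {f : AddMonoidAlgebra ℚ V} (hf : f ∈ augI V) :
    ∀ h : Polynomial.monomial 1 f ∈ reesAlgebra (augI V),
      grMk V ⟨Polynomial.monomial 1 f, h⟩ ∈ (φ V).range := by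
  have hs := augI_le_span hf
  refine Submodule.span_induction
    (p := fun g _ => ∀ h : Polynomial.monomial 1 g ∈ reesAlgebra (augI V),
      grMk V ⟨Polynomial.monomial 1 g, h⟩ ∈ (φ V).range) ?_ ?_ ?_ ?_ hs
  · rintro x ⟨v, rfl⟩ h
    have : (⟨Polynomial.monomial 1 (AddMonoidAlgebra.single v 1 - 1), h⟩ :
        ↥(reesAlgebra (augI V))) = deg1 v := Subtype.ext rfl
    rw [this]
    exact ⟨symMk V (TensorAlgebra.ι ℚ ((1:ℚ) ⊗ₜ[ℤ] v)), by
      show φ V (symMk V (TensorAlgebra.ι ℚ ((1:ℚ) ⊗ₜ[ℤ] v))) = grMk V (deg1 v)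
      rw [φ_mk_ι, Lmap_one_tmul]⟩
  · intro h
    have : (⟨Polynomial.monomial 1 (0 : AddMonoidAlgebra ℚ V), h⟩ :
        ↥(reesAlgebra (augI V))) = 0 := Subtype.ext (by
      show Polynomial.monomial 1 (0 : AddMonoidAlgebra ℚ V) = 0
      exact map_zero _)
    rw [this, map_zero]
    exact (φ V).range.zero_mem
  · intro x y hxs hys hx hy h
    have hx' : Polynomial.monomial 1 x ∈ reesAlgebra (augI V) := by
      rw [reesAlgebra.monomial_mem, pow_one]
      exact span_le_augI hxs
    have hy' : Polynomial.monomial 1 y ∈ reesAlgebra (augI V) := by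
      rw [reesAlgebra.monomial_mem, pow_one]
      exact span_le_augI hys
    have : (⟨Polynomial.monomial 1 (x + y), h⟩ : ↥(reesAlgebra (augI V)))
        = ⟨Polynomial.monomial 1 x, hx'⟩ + ⟨Polynomial.monomial 1 y, hy'⟩ :=
      Subtype.ext (by push_cast [map_add]; rfl)
    rw [this, map_add]
    exact (φ V).range.add_mem (hx hx') (hy hy')
  · intro q x hxs hx h
    have hx' : Polynomial.monomial 1 x ∈ reesAlgebra (augI V) := by
      rw [reesAlgebra.monomial_mem, pow_one]
      exact span_le_augI hxs
    have : (⟨Polynomial.monomial 1 (q • x), h⟩ : ↥(reesAlgebra (augI V)))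
        = q • ⟨Polynomial.monomial 1 x, hx'⟩ :=
      Subtype.ext (by push_cast [Polynomial.smul_monomial]; rfl)
    rw [this, map_smul]
    exact (φ V).range.smul_mem (hx hx') q

theorem grMk_monomial_mem : ∀ (n : ℕ) (f : AddMonoidAlgebra ℚ V), f ∈ (augI V) ^ n →
    ∀ h : Polynomial.monomial n f ∈ reesAlgebra (augI V),
      grMk V ⟨Polynomial.monomial n f, h⟩ ∈ (φ V).range := by
  intro n
  induction n with
  | zero =>
      intro f _ h
      have : (⟨Polynomial.monomial 0 f, h⟩ : ↥(reesAlgebra (augI V)))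
          = algebraMap (AddMonoidAlgebra ℚ V) ↥(reesAlgebra (augI V)) f :=
        Subtype.ext (by
          show Polynomial.monomial 0 f = Polynomial.C f
          rw [Polynomial.monomial_zero_left])
      rw [this]
      exact grMk_algebraMap_mem f
  | succ n ih =>
      intro f hf
      rw [pow_succ] at hf
      refine Submodule.mul_induction_on
        (C := fun g => g ∈ (augI V) ^ (n + 1) ∧
          ∀ h : Polynomial.monomial (n+1) g ∈ reesAlgebra (augI V),
            grMk V ⟨Polynomial.monomial (n+1) g, h⟩ ∈ (φ V).range) hf ?_ ?_ |>.2
      · intro m hm r hr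
        constructor
        · rw [pow_succ]
          exact Ideal.mul_mem_mul hm hr
        · intro h
          have hm' : Polynomial.monomial n m ∈ reesAlgebra (augI V) := by
            rw [reesAlgebra.monomial_mem]; exact hm
          have hr' : Polynomial.monomial 1 r ∈ reesAlgebra (augI V) := by
            rw [reesAlgebra.monomial_mem, pow_one]; exact hr
          have : (⟨Polynomial.monomial (n+1) (m * r), h⟩ : ↥(reesAlgebra (augI V)))
              = ⟨Polynomial.monomial n m, hm'⟩ * ⟨Polynomial.monomial 1 r, hr'⟩ :=
            Subtype.ext (by
              push_cast
              rw [Polynomial.monomial_mul_monomial])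
          rw [this, map_mul]
          exact (φ V).range.mul_mem (ih m hm hm') (grMk_mon1_mem hr hr')
      · rintro x y ⟨hx1, hx2⟩ ⟨hy1, hy2⟩
        refine ⟨Submodule.add_mem _ hx1 hy1, fun h => ?_⟩
        have hx' : Polynomial.monomial (n+1) x ∈ reesAlgebra (augI V) := by
          rw [reesAlgebra.monomial_mem]; exact hx1
        have hy' : Polynomial.monomial (n+1) y ∈ reesAlgebra (augI V) := by
          rw [reesAlgebra.monomial_mem]; exact hy1
        have : (⟨Polynomial.monomial (n+1) (x + y), h⟩ : ↥(reesAlgebra (augI V)))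
            = ⟨Polynomial.monomial (n+1) x, hx'⟩ + ⟨Polynomial.monomial (n+1) y, hy'⟩ :=
          Subtype.ext (by push_cast [map_add]; rfl)
        rw [this, map_add]
        exact (φ V).range.add_mem (hx2 hx') (hy2 hy')

theorem φ_surjective : Function.Surjective (φ V) := by
  intro y
  obtain ⟨p, rfl⟩ := Ideal.Quotient.mkₐ_surjective ℚ (J V) y
  have : Ideal.Quotient.mkₐ ℚ (J V) p = grMk V p := rfl
  rw [this]
  suffices h : grMk V p ∈ (φ V).range by exact h
  have hrep : p = ∑ i ∈ p.1.support,
      (⟨Polynomial.monomial i (p.1.coeff i), by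
        rw [reesAlgebra.monomial_mem]; exact p.2 i⟩ : ↥(reesAlgebra (augI V))) := by
    apply Subtype.ext
    rw [AddSubmonoidClass.coe_finset_sum]
    exact p.1.as_sum_support
  rw [hrep, map_sum]
  exact sum_mem fun i _ => grMk_monomial_mem i _ (p.2 i) _

end Stmt17

/-- the graded algebra associated to the augmentation-ideal filtration of the
rational group algebra `ℚ[V]` is isomorphic to the symmetric algebra over `ℚ` on `ℚ ⊗ V`. -/
theorem stmt17 : Nonempty ((GrAlg V) ≃ₐ[ℚ] RingQuot (symRel V)) := by
  have hinj : Function.Injective (Stmt17.φ V) := by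
    intro a b hab
    have h1 : Stmt17.ψbar V (Stmt17.φ V a) = Stmt17.ψbar V (Stmt17.φ V b) := by rw [hab]
    have h2 := congrFun (congrArg (fun f => (DFunLike.coe f)) (Stmt17.ψbar_comp_φ (V := V)))
    have ha := h2 a
    have hb := h2 b
    simp only [AlgHom.comp_apply, AlgHom.id_apply] at ha hb
    rw [ha, hb] at h1
    exact h1
  exact ⟨(AlgEquiv.ofBijective (Stmt17.φ V) ⟨hinj, Stmt17.φ_surjective⟩).symm⟩

end
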